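/- (Tightness of the 1/3 bound) On ℂ³, define L P = R P = Re (Matrix.trace P) / 3 for every matrix P. Then (L, R) is a QIVPM on ℂ³ (note Re (Matrix.trace P) equals the rank of the projector P, so the assigned values on projectors lie in {0, 1/3, 2/3, 1}), and this QIVPM is (1/3)-deterministic. -/

import Mathlib

open Matrix
open scoped ComplexOrder

/-- A projector on `ℂ^d`: an idempotent, self-adjoint matrix. -/
def IsProjector {d : ℕ} (P : Matrix (Fin d) (Fin d) ℂ) : Prop :=
  P * P = P ∧ Pᴴ = P

/-- A quantum interval-valued probability measure (QIVPM) on `ℂ^d`,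
given by the pair of interval-endpoint functions `L ≤ R`. -/
def IsQIVPM {d : ℕ} (L R : Matrix (Fin d) (Fin d) ℂ → ℝ) : Prop :=
  (∀ P, IsProjector P → 0 ≤ L P ∧ L P ≤ R P ∧ R P ≤ 1) ∧
  (L 0 = 0 ∧ R 0 = 0) ∧
  (L 1 = 1 ∧ R 1 = 1) ∧
  (∀ P, IsProjector P → L (1 - P) = 1 - R P ∧ R (1 - P) = 1 - L P) ∧
  (∀ P₀ P₁, IsProjector P₀ → IsProjector P₁ → P₀ * P₁ = P₁ * P₀ →
    L P₀ + L P₁ ≤ L (P₀ + P₁ - P₀ * P₁) + L (P₀ * P₁) ∧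
    R (P₀ + P₁ - P₀ * P₁) + R (P₀ * P₁) ≤ R P₀ + R P₁)

/-- A QIVPM is `δ`-deterministic if every projector's interval lies in `[0,δ]` or `[1-δ,1]`. -/
def IsDeltaDet {d : ℕ} (δ : ℝ) (L R : Matrix (Fin d) (Fin d) ℂ → ℝ) : Prop :=
  ∀ P, IsProjector P → R P ≤ δ ∨ 1 - δ ≤ L P

/-- A QIVPM is `0`-deterministic if every projector is assigned `[0,0]` or `[1,1]`. -/
def IsZeroDet {d : ℕ} (L R : Matrix (Fin d) (Fin d) ℂ → ℝ) : Prop :=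
  ∀ P, IsProjector P → (L P = 0 ∧ R P = 0) ∨ (L P = 1 ∧ R P = 1)

/-- A state (density matrix) on `ℂ^d`. -/
def IsState {d : ℕ} (ρ : Matrix (Fin d) (Fin d) ℂ) : Prop :=
  ρ.PosSemidef ∧ ρ.trace = 1

section Aux

variable {d : ℕ}

lemma proj_eig_zero_or_one {P : Matrix (Fin d) (Fin d) ℂ} (h : IsProjector P)
    (hH : P.IsHermitian) (i : Fin d) :
    hH.eigenvalues i = 0 ∨ hH.eigenvalues i = 1 := by
  have hD : star (hH.eigenvectorUnitary : Matrix (Fin d) (Fin d) ℂ) * P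
      * (hH.eigenvectorUnitary : Matrix (Fin d) (Fin d) ℂ)
      = diagonal (RCLike.ofReal ∘ hH.eigenvalues) := by
    simpa using hH.conjStarAlgAut_star_eigenvectorUnitary
  set U : Matrix (Fin d) (Fin d) ℂ := (hH.eigenvectorUnitary : Matrix (Fin d) (Fin d) ℂ) with hU
  have hUU : U * star U = 1 := (Matrix.mem_unitaryGroup_iff).mp hH.eigenvectorUnitary.2
  have hsq : diagonal ((RCLike.ofReal ∘ hH.eigenvalues : Fin d → ℂ))
        * diagonal ((RCLike.ofReal ∘ hH.eigenvalues : Fin d → ℂ))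
      = diagonal ((RCLike.ofReal ∘ hH.eigenvalues : Fin d → ℂ)) := by
    conv_lhs => rw [← hD]
    calc (star U * P * U) * (star U * P * U) = star U * P * (U * star U) * P * U := by
          noncomm_ring
      _ = star U * (P * P) * U := by rw [hUU]; noncomm_ring
      _ = star U * P * U := by rw [h.1]
      _ = diagonal (RCLike.ofReal ∘ hH.eigenvalues) := hD
  rw [diagonal_mul_diagonal] at hsq
  have := congrArg (fun M => M i i) hsq
  simp only [diagonal_apply_eq, Pi.mul_apply, Function.comp_apply] at this
  have h2 : hH.eigenvalues i * hH.eigenvalues i = hH.eigenvalues i := by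
    exact_mod_cast this
  rcases mul_eq_zero.mp (by ring_nf; linarith [h2] : hH.eigenvalues i * (hH.eigenvalues i - 1) = 0)
    with h0 | h1
  · exact Or.inl h0
  · exact Or.inr (by linarith)

lemma proj_trace_re_eq_rank {P : Matrix (Fin d) (Fin d) ℂ} (h : IsProjector P) :
    (Matrix.trace P).re = (P.rank : ℝ) := by
  have hH : P.IsHermitian := h.2
  set U : Matrix (Fin d) (Fin d) ℂ := (hH.eigenvectorUnitary : Matrix (Fin d) (Fin d) ℂ) with hU
  have hUU : star U * U = 1 := (Matrix.mem_unitaryGroup_iff').mp hH.eigenvectorUnitary.2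
  have htr : Matrix.trace P = ∑ i, (hH.eigenvalues i : ℂ) := by
    conv_lhs => rw [hH.spectral_theorem, Unitary.conjStarAlgAut_apply]
    rw [Matrix.trace_mul_cycle, hUU, one_mul, Matrix.trace_diagonal]
    rfl
  have hre : (Matrix.trace P).re = ∑ i, hH.eigenvalues i := by
    rw [htr]; simp [Complex.re_sum]
  rw [hre, hH.rank_eq_card_non_zero_eigs]
  rw [Fintype.card_subtype]
  rw [Finset.card_filter]
  rw [Finset.sum_congr rfl]
  · push_cast; rfl
  · intro i _
    rcases proj_eig_zero_or_one h hH i with h0 | h1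
    · simp [h0]
    · simp [h1]

lemma proj_trace_re_mem {P : Matrix (Fin 3) (Fin 3) ℂ} (h : IsProjector P) :
    (Matrix.trace P).re = 0 ∨ (Matrix.trace P).re = 1 ∨ (Matrix.trace P).re = 2 ∨
      (Matrix.trace P).re = 3 := by
  rw [proj_trace_re_eq_rank h]
  have h3 : P.rank ≤ 3 := P.rank_le_width
  interval_cases h' : P.rank <;> norm_num

end Aux

/-- Tightness of the `1/3` bound: on `ℂ³` the assignment `P ↦ [tr P / 3, tr P / 3]`
(whose value on a projector of rank `n` is `n/3`) is a `(1/3)`-deterministic QIVPM. -/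
theorem oneThirdDeterministic_QIVPM_exists :
    (∀ P : Matrix (Fin 3) (Fin 3) ℂ, IsProjector P → (Matrix.trace P).re = (P.rank : ℝ)) ∧
    (∀ P : Matrix (Fin 3) (Fin 3) ℂ, IsProjector P →
      (Matrix.trace P).re / 3 ∈ ({0, 1/3, 2/3, 1} : Set ℝ)) ∧
    IsQIVPM (fun P : Matrix (Fin 3) (Fin 3) ℂ => (Matrix.trace P).re / 3)
      (fun P : Matrix (Fin 3) (Fin 3) ℂ => (Matrix.trace P).re / 3) ∧
    IsDeltaDet (1/3) (fun P : Matrix (Fin 3) (Fin 3) ℂ => (Matrix.trace P).re / 3)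
      (fun P : Matrix (Fin 3) (Fin 3) ℂ => (Matrix.trace P).re / 3) := by
  refine ⟨fun P hP => proj_trace_re_eq_rank hP, ?_, ?_, ?_⟩
  · intro P hP
    rcases proj_trace_re_mem hP with h | h | h | h <;> rw [h] <;> norm_num
  · refine ⟨?_, ⟨?_, ?_⟩, ⟨?_, ?_⟩, ?_, ?_⟩
    · intro P hP
      dsimp only
      rcases proj_trace_re_mem hP with h | h | h | h <;> rw [h] <;> norm_num
    · simp
    · simp
    · simp [Matrix.trace_one]
    · simp [Matrix.trace_one]
    · intro P hP
      dsimp only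
      have h1 : Matrix.trace (1 - P) = 3 - Matrix.trace P := by
        rw [Matrix.trace_sub, Matrix.trace_one]; norm_num
      constructor <;> rw [h1] <;> simp [Complex.sub_re] <;> ring
    · intro P₀ P₁ _ _ _
      dsimp only
      have h1 : Matrix.trace (P₀ + P₁ - P₀ * P₁) = Matrix.trace P₀ + Matrix.trace P₁
          - Matrix.trace (P₀ * P₁) := by
        rw [Matrix.trace_sub, Matrix.trace_add]
      have h2 : (Matrix.trace (P₀ + P₁ - P₀ * P₁)).re / 3 + (Matrix.trace (P₀ * P₁)).re / 3
          = (Matrix.trace P₀).re / 3 + (Matrix.trace P₁).re / 3 := by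
        rw [h1]; simp [Complex.sub_re, Complex.add_re]; ring
      exact ⟨le_of_eq h2.symm, le_of_eq h2⟩
  · intro P hP
    dsimp only
    rcases proj_trace_re_mem hP with h | h | h | h <;> rw [h] <;> norm_num
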